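/- Let 0 < α < π/2 and let e₁, e₂, e₃ be unit vectors in ℝ³ such that the angle between each pair eᵢ, eⱼ (i ≠ j) lies between π/2 − α and π/2 + α, equivalently |⟨eᵢ, eⱼ⟩| ≤ sin α for i ≠ j. Let λ₁ ≤ rᵢ ≤ λ₂ with λ₁ > 0. Then for any x = (x₁, x₂, x₃) ∈ ℝ³ (assuming 2 sin α < 1), λ₁·√(1 − 2 sin α)·‖x‖ ≤ ‖x₁r₁e₁ + x₂r₂e₂ + x₃r₃e₃‖ ≤ λ₂·√(1 + 2 sin α)·‖x‖. -/

import Mathlib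

open Real Finset

set_option maxHeartbeats 1000000

noncomputable section

theorem stmt_1
    (α : ℝ) (hα0 : 0 < α) (hα1 : α < π / 2) (hsin : 2 * Real.sin α < 1)
    (e : Fin 3 → EuclideanSpace ℝ (Fin 3)) (he : ∀ i, ‖e i‖ = 1)
    (hangle : ∀ i j, i ≠ j → |(inner ℝ (e i) (e j) : ℝ)| ≤ Real.sin α)
    (r : Fin 3 → ℝ) (l₁ l₂ : ℝ) (hl₁ : 0 < l₁)
    (hr : ∀ i, l₁ ≤ r i ∧ r i ≤ l₂)
    (x : EuclideanSpace ℝ (Fin 3)) :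
    l₁ * Real.sqrt (1 - 2 * Real.sin α) * ‖x‖ ≤ ‖∑ i, (x i * r i) • e i‖ ∧
      ‖∑ i, (x i * r i) • e i‖ ≤ l₂ * Real.sqrt (1 + 2 * Real.sin α) * ‖x‖ := by
  set s := Real.sin α with hs_def
  have hπ : α < π := lt_trans hα1 (by linarith [Real.pi_pos])
  have hs0 : 0 < s := Real.sin_pos_of_pos_of_lt_pi hα0 hπ
  have ht : (0:ℝ) ≤ 1 - 2*s := by linarith
  set v := ∑ i, (x i * r i) • e i with hv
  set a := (inner ℝ (e 0) (e 1) : ℝ) with ha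
  set b := (inner ℝ (e 0) (e 2) : ℝ) with hb
  set c := (inner ℝ (e 1) (e 2) : ℝ) with hc
  have hea : |a| ≤ s := hangle 0 1 (by decide)
  have heb : |b| ≤ s := hangle 0 2 (by decide)
  have hec : |c| ≤ s := hangle 1 2 (by decide)
  have hii : ∀ i, (inner ℝ (e i) (e i) : ℝ) = 1 := by
    intro i
    rw [real_inner_self_eq_norm_sq, he i]; norm_num
  set y : Fin 3 → ℝ := fun i => x i * r i with hy
  have hvv : ‖v‖^2 = y 0^2 + y 1^2 + y 2^2 + 2*(y 0 * y 1 * a + y 0 * y 2 * b + y 1 * y 2 * c) := by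
    rw [← real_inner_self_eq_norm_sq]
    simp only [hv, Fin.sum_univ_three, inner_add_left, inner_add_right,
      real_inner_smul_left, real_inner_smul_right]
    have h10 : (inner ℝ (e 1) (e 0) : ℝ) = a := by rw [ha]; exact real_inner_comm _ _
    have h20 : (inner ℝ (e 2) (e 0) : ℝ) = b := by rw [hb]; exact real_inner_comm _ _
    have h21 : (inner ℝ (e 2) (e 1) : ℝ) = c := by rw [hc]; exact real_inner_comm _ _
    rw [hii 0, hii 1, hii 2, h10, h20, h21, ← ha, ← hb, ← hc]
    simp only [hy]
    ring
  have hx2 : ‖x‖^2 = x 0^2 + x 1^2 + x 2^2 := by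
    rw [← real_inner_self_eq_norm_sq]
    simp only [PiLp.inner_apply, RCLike.inner_apply, conj_trivial, Fin.sum_univ_three]
    ring
  have haa := abs_le.mp hea
  have hbb := abs_le.mp heb
  have hcc := abs_le.mp hec
  have hlow : (1 - 2*s) * (y 0^2 + y 1^2 + y 2^2) ≤ ‖v‖^2 := by
    rw [hvv]
    nlinarith [mul_nonneg (by linarith : (0:ℝ) ≤ s + a) (sq_nonneg (y 0 + y 1)),
      mul_nonneg (by linarith : (0:ℝ) ≤ s - a) (sq_nonneg (y 0 - y 1)),
      mul_nonneg (by linarith : (0:ℝ) ≤ s + b) (sq_nonneg (y 0 + y 2)),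
      mul_nonneg (by linarith : (0:ℝ) ≤ s - b) (sq_nonneg (y 0 - y 2)),
      mul_nonneg (by linarith : (0:ℝ) ≤ s + c) (sq_nonneg (y 1 + y 2)),
      mul_nonneg (by linarith : (0:ℝ) ≤ s - c) (sq_nonneg (y 1 - y 2))]
  have hhigh : ‖v‖^2 ≤ (1 + 2*s) * (y 0^2 + y 1^2 + y 2^2) := by
    rw [hvv]
    nlinarith [mul_nonneg (by linarith : (0:ℝ) ≤ s + a) (sq_nonneg (y 0 - y 1)),
      mul_nonneg (by linarith : (0:ℝ) ≤ s - a) (sq_nonneg (y 0 + y 1)),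
      mul_nonneg (by linarith : (0:ℝ) ≤ s + b) (sq_nonneg (y 0 - y 2)),
      mul_nonneg (by linarith : (0:ℝ) ≤ s - b) (sq_nonneg (y 0 + y 2)),
      mul_nonneg (by linarith : (0:ℝ) ≤ s + c) (sq_nonneg (y 1 - y 2)),
      mul_nonneg (by linarith : (0:ℝ) ≤ s - c) (sq_nonneg (y 1 + y 2))]
  have hri : ∀ i, l₁^2 * (x i)^2 ≤ (y i)^2 ∧ (y i)^2 ≤ l₂^2 * (x i)^2 := by
    intro i
    have h1 := (hr i).1
    have h2 := (hr i).2
    constructor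
    · have : l₁^2 ≤ (r i)^2 := by nlinarith
      simp only [hy, mul_pow]
      nlinarith [sq_nonneg (x i)]
    · have : (r i)^2 ≤ l₂^2 := by nlinarith
      simp only [hy, mul_pow]
      nlinarith [sq_nonneg (x i)]
  have hylow : l₁^2 * ‖x‖^2 ≤ y 0^2 + y 1^2 + y 2^2 := by
    rw [hx2]
    have h0 := (hri 0).1; have h1 := (hri 1).1; have h2 := (hri 2).1
    linarith
  have hyhigh : y 0^2 + y 1^2 + y 2^2 ≤ l₂^2 * ‖x‖^2 := by
    rw [hx2]
    have h0 := (hri 0).2; have h1 := (hri 1).2; have h2 := (hri 2).2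
    linarith
  have hl₂ : 0 < l₂ := lt_of_lt_of_le hl₁ (le_trans (hr 0).1 (hr 0).2)
  constructor
  · have hsq : (l₁ * Real.sqrt (1 - 2*s) * ‖x‖)^2 ≤ ‖v‖^2 := by
      have : (l₁ * Real.sqrt (1 - 2*s) * ‖x‖)^2 = (1 - 2*s) * (l₁^2 * ‖x‖^2) := by
        rw [mul_pow, mul_pow, Real.sq_sqrt ht]; ring
      rw [this]
      calc (1 - 2*s) * (l₁^2 * ‖x‖^2) ≤ (1 - 2*s) * (y 0^2 + y 1^2 + y 2^2) :=
            mul_le_mul_of_nonneg_left hylow ht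
        _ ≤ ‖v‖^2 := hlow
    have hnn : 0 ≤ l₁ * Real.sqrt (1 - 2*s) * ‖x‖ :=
      mul_nonneg (mul_nonneg hl₁.le (Real.sqrt_nonneg _)) (norm_nonneg _)
    exact (pow_le_pow_iff_left₀ hnn (norm_nonneg v) two_ne_zero).mp hsq
  · have ht' : (0:ℝ) ≤ 1 + 2*s := by linarith
    have hsq : ‖v‖^2 ≤ (l₂ * Real.sqrt (1 + 2*s) * ‖x‖)^2 := by
      have : (l₂ * Real.sqrt (1 + 2*s) * ‖x‖)^2 = (1 + 2*s) * (l₂^2 * ‖x‖^2) := by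
        rw [mul_pow, mul_pow, Real.sq_sqrt ht']; ring
      rw [this]
      calc ‖v‖^2 ≤ (1 + 2*s) * (y 0^2 + y 1^2 + y 2^2) := hhigh
        _ ≤ (1 + 2*s) * (l₂^2 * ‖x‖^2) := mul_le_mul_of_nonneg_left hyhigh ht'
    have hnn : 0 ≤ l₂ * Real.sqrt (1 + 2*s) * ‖x‖ :=
      mul_nonneg (mul_nonneg hl₂.le (Real.sqrt_nonneg _)) (norm_nonneg _)
    exact (pow_le_pow_iff_left₀ (norm_nonneg v) hnn two_ne_zero).mp hsq

end
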